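/- Let C ∈ 𝓑, β ∈ (0,1), and let ν be a probability measure on (S,𝓑) with P(x,·) ≥ β ν for all x ∈ C. Define the split chain as the Markov chain (X_n, Y_n) on S × {0,1} in which, given X_n = x, the bit Y_n equals 1 with probability β·1_C(x) (and 0 otherwise, independently of the past given X_n), and given (X_n, Y_n) = (x, i), the next state X_{n+1} has law ν if i = 1 and law (P(x,·) − β·1_C(x)·ν)/(1 − β·1_C(x)) if i = 0. Then for every x ∈ S, the law of the sequence (X_n)_{n≥0} obtained from the split chain started with X_0 = x equals ℙ^x, the law of the original Markov chain with kernel P started at x. -/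

import Mathlib

open MeasureTheory ProbabilityTheory
open scoped ENNReal NNReal

noncomputable section

/-- The hitting time `T_A = inf {n ≥ 1 : ω n ∈ A}`, with value `⊤ : ℕ∞` if no such `n` exists. -/
def hitTime {S : Type*} (A : Set S) (ω : ℕ → S) : ℕ∞ :=
  sInf ((fun k : ℕ => (k : ℕ∞)) '' {k : ℕ | 1 ≤ k ∧ ω k ∈ A})

/-- `IsMarkovPath K μ₀ L` says that `L` is the law on path space `ℕ → E` of the
time-homogeneous Markov chain with transition kernel `K` and initial distribution `μ₀`
(the measure produced by the Ionescu–Tulcea construction), characterized through its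
finite-dimensional distributions. -/
def IsMarkovPath {E : Type*} [MeasurableSpace E] (K : Kernel E E) (μ₀ : Measure E)
    (L : Measure (ℕ → E)) : Prop :=
  IsProbabilityMeasure L ∧
    L.map (fun ω => ω 0) = μ₀ ∧
    ∀ n : ℕ,
      L.map (fun ω => fun i : Fin (n + 2) => ω (i : ℕ)) =
        (L.map (fun ω => fun i : Fin (n + 1) => ω (i : ℕ))).bind
          (fun v => (K (v (Fin.last n))).map (Fin.snoc v))


/-- The distribution of `(x', Y)` where `Y` is a Bernoulli variable with success
probability `β · 1_C (x')`. -/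
def tagDist {S : Type*} [MeasurableSpace S] (C : Set S) (β : ℝ≥0∞) (x' : S) :
    Measure (S × Bool) :=
  (β * C.indicator 1 x') • Measure.dirac (x', true) +
    (1 - β * C.indicator 1 x') • Measure.dirac (x', false)

/-- The residual transition distribution `(P (x, ·) − β 1_C (x) ν) / (1 − β 1_C (x))`. -/
def residDist {S : Type*} [MeasurableSpace S] (P : Kernel S S) (C : Set S) (β : ℝ≥0∞)
    (ν : Measure S) (x : S) : Measure S :=
  (1 - β * C.indicator 1 x)⁻¹ • (P x - (β * C.indicator 1 x) • ν)

section Aux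

variable {α β' γ : Type*} [MeasurableSpace α] [MeasurableSpace β'] [MeasurableSpace γ]

lemma measure_map_bind (μ : Measure α) {f : α → Measure β'} (hf : Measurable f)
    {g : β' → γ} (hg : Measurable g) :
    (μ.bind f).map g = μ.bind fun a => (f a).map g := by
  ext s hs
  have hm : Measurable fun a => (f a).map g := (Measure.measurable_map g hg).comp hf
  rw [Measure.map_apply hg hs, Measure.bind_apply (hg hs) hf.aemeasurable, Measure.bind_apply hs hm.aemeasurable]
  exact lintegral_congr fun a => (Measure.map_apply hg hs).symm

lemma measure_bind_map (μ : Measure α) {f : α → β'} (hf : Measurable f)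
    {g : β' → Measure γ} (hg : Measurable g) :
    (μ.map f).bind g = μ.bind fun a => g (f a) := by
  ext s hs
  have hm : Measurable fun a => g (f a) := hg.comp hf
  have hc : Measurable fun b : β' => g b s := (Measure.measurable_coe hs).comp hg
  rw [Measure.bind_apply hs hg.aemeasurable, Measure.bind_apply hs hm.aemeasurable, lintegral_map hc hf]

lemma measure_smul_bind (c : ℝ≥0∞) (μ : Measure α) {f : α → Measure β'} (hf : Measurable f) :
    (c • μ).bind f = c • μ.bind f := by
  ext s hs
  rw [Measure.smul_apply, Measure.bind_apply hs hf.aemeasurable, Measure.bind_apply hs hf.aemeasurable,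
    lintegral_smul_measure, smul_eq_mul]

lemma measure_add_bind (μ ν : Measure α) {f : α → Measure β'} (hf : Measurable f) :
    (μ + ν).bind f = μ.bind f + ν.bind f := by
  ext s hs
  rw [Measure.add_apply, Measure.bind_apply hs hf.aemeasurable, Measure.bind_apply hs hf.aemeasurable,
    Measure.bind_apply hs hf.aemeasurable, lintegral_add_measure]

variable {S : Type*} [MeasurableSpace S]

lemma tagDist_map {T : Type*} [MeasurableSpace T] (C : Set S) (β : ℝ≥0∞) (y : S)
    {f : S × Bool → T} (hf : Measurable f) :
    (tagDist C β y).map f = (β * C.indicator 1 y) • Measure.dirac (f (y, true))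
      + (1 - β * C.indicator 1 y) • Measure.dirac (f (y, false)) := by
  rw [tagDist, Measure.map_add _ _ hf, Measure.map_smul, Measure.map_smul,
    Measure.map_dirac' hf, Measure.map_dirac' hf]

lemma tagDist_bind {T : Type*} [MeasurableSpace T] (C : Set S) (β : ℝ≥0∞) (y : S)
    {f : S × Bool → Measure T} (hf : Measurable f) :
    (tagDist C β y).bind f = (β * C.indicator 1 y) • f (y, true)
      + (1 - β * C.indicator 1 y) • f (y, false) := by
  rw [tagDist, measure_add_bind _ _ hf, measure_smul_bind _ _ hf, measure_smul_bind _ _ hf,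
    Measure.dirac_bind hf, Measure.dirac_bind hf]

lemma tagDist_univ {C : Set S} {β : ℝ≥0∞} (hβ : β ≤ 1) (x : S) :
    tagDist C β x Set.univ = 1 := by
  have h1 : β * C.indicator 1 x ≤ 1 := by
    by_cases hx : x ∈ C <;> simp [Set.indicator_of_mem, Set.indicator_of_notMem, hx, hβ]
  simp only [tagDist, Measure.add_apply, Measure.smul_apply, smul_eq_mul,
    Measure.dirac_apply' _ MeasurableSet.univ, Set.indicator_of_mem (Set.mem_univ _),
    Pi.one_apply, mul_one]
  rw [add_comm]
  exact tsub_add_cancel_of_le h1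

lemma isProbability_tagDist {C : Set S} {β : ℝ≥0∞} (hβ : β ≤ 1) (x : S) :
    IsProbabilityMeasure (tagDist C β x) := ⟨tagDist_univ hβ x⟩

lemma measurable_tagDist {C : Set S} (hC : MeasurableSet C) (β : ℝ≥0∞) :
    Measurable (tagDist C β) := by
  have hind : Measurable fun x : S => β * C.indicator 1 x :=
    (measurable_const.indicator hC).const_mul β
  apply Measure.measurable_of_measurable_coe
  intro s hs
  simp only [tagDist, Measure.add_apply, Measure.smul_apply, smul_eq_mul,
    Measure.dirac_apply' _ hs]
  have h1 : Measurable fun x : S => s.indicator (1 : S × Bool → ℝ≥0∞) (x, true) :=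
    (measurable_one.indicator hs).comp (measurable_id.prodMk measurable_const)
  have h2 : Measurable fun x : S => s.indicator (1 : S × Bool → ℝ≥0∞) (x, false) :=
    (measurable_one.indicator hs).comp (measurable_id.prodMk measurable_const)
  exact (hind.mul h1).add ((measurable_const.sub hind).mul h2)

variable {P : Kernel S S} {C : Set S} {β : ℝ≥0∞} {ν : Measure S}

lemma residDist_of_mem {x : S} (hx : x ∈ C) :
    residDist P C β ν x = (1 - β)⁻¹ • (P x - β • ν) := by
  simp [residDist, Set.indicator_of_mem hx]

lemma measure_sub_zero {α : Type*} [MeasurableSpace α] (μ : Measure α) : μ - 0 = μ :=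
  le_antisymm Measure.sub_le (le_sInf (fun d hd => by simpa using hd))

lemma residDist_of_not_mem {x : S} (hx : x ∉ C) : residDist P C β ν x = P x := by
  simp [residDist, Set.indicator_of_notMem hx, measure_sub_zero]

lemma isFiniteMeasure_smul [IsProbabilityMeasure ν] (hβ1 : β < 1) :
    IsFiniteMeasure (β • ν) := by
  refine ⟨?_⟩
  rw [Measure.smul_apply, measure_univ, smul_eq_mul, mul_one]
  exact hβ1.trans ENNReal.one_lt_top

lemma mix_residDist [IsMarkovKernel P] [IsProbabilityMeasure ν] (hβ1 : β < 1)
    (hmin : ∀ x ∈ C, β • ν ≤ P x) (x : S) :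
    (β * C.indicator 1 x) • ν + (1 - β * C.indicator 1 x) • residDist P C β ν x = P x := by
  haveI : IsFiniteMeasure (β • ν) := isFiniteMeasure_smul hβ1
  by_cases hx : x ∈ C
  · rw [residDist_of_mem hx]
    simp only [Set.indicator_of_mem hx, Pi.one_apply, mul_one]
    rw [smul_smul, ENNReal.mul_inv_cancel (tsub_pos_of_lt hβ1).ne'
      (tsub_le_self.trans_lt ENNReal.one_lt_top).ne, one_smul, add_comm,
      Measure.sub_add_cancel_of_le (hmin x hx)]
  · rw [residDist_of_not_mem hx]
    simp [Set.indicator_of_notMem hx]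

lemma measurable_residDist [IsMarkovKernel P] [IsProbabilityMeasure ν] (hC : MeasurableSet C)
    (hβ1 : β < 1) (hmin : ∀ x ∈ C, β • ν ≤ P x) :
    Measurable (residDist P C β ν) := by
  classical
  haveI : IsFiniteMeasure (β • ν) := isFiniteMeasure_smul hβ1
  apply Measure.measurable_of_measurable_coe
  intro s hs
  have heq : (fun x => residDist P C β ν x s)
      = fun x => if x ∈ C then (1 - β)⁻¹ * (P x s - β * ν s) else P x s := by
    funext x
    by_cases hx : x ∈ C
    · rw [residDist_of_mem hx, if_pos hx, Measure.smul_apply, smul_eq_mul,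
        Measure.sub_apply hs (hmin x hx), Measure.smul_apply, smul_eq_mul]
    · rw [residDist_of_not_mem hx, if_neg hx]
  rw [heq]
  exact Measurable.ite hC (((P.measurable_coe hs).sub measurable_const).const_mul _)
    (P.measurable_coe hs)

lemma measurable_snoc_pair {E : Type*} [MeasurableSpace E] (n : ℕ) :
    Measurable fun q : (Fin n → E) × E => Fin.snoc (α := fun _ => E) q.1 q.2 := by
  refine measurable_pi_lambda _ fun i => ?_
  induction i using Fin.lastCases with
  | last => simpa only [Fin.snoc_last] using measurable_snd
  | cast j => simpa only [Fin.snoc_castSucc] using (measurable_fst.eval : Measurable fun c : (Fin n → E) × E => c.1 j)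

lemma measurable_map_kernel_param {δ : Type*} [MeasurableSpace δ]
    (κ : Kernel α β') [IsSFiniteKernel κ]
    {ρ : δ → α} (hρ : Measurable ρ) {F : δ × β' → γ} (hF : Measurable F) :
    Measurable fun d => (κ (ρ d)).map (fun b => F (d, b)) := by
  apply Measure.measurable_of_measurable_coe
  intro s hs
  have key := Kernel.measurable_kernel_prodMk_left (κ := κ.comap ρ hρ) (hF hs)
  have heq : (fun d => (κ (ρ d)).map (fun b => F (d, b)) s)
      = fun d => (κ.comap ρ hρ) d (Prod.mk d ⁻¹' (F ⁻¹' s)) := by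
    funext d
    have hm : Measurable fun b => F (d, b) := hF.comp measurable_prodMk_left
    rw [Measure.map_apply hm hs, Kernel.comap_apply]
    rfl
  rw [heq]; exact key

end Aux

/-- **Nummelin splitting.** The first component of the split chain, started at `x` (with
`Y_0` Bernoulli of parameter `β 1_C (x)`), has the law `ℙ^x` of the original chain. -/
theorem split_chain_first_component_law
    {S : Type*} [MeasurableSpace S] [MeasurableSpace.CountablyGenerated S]
    (P : Kernel S S) [IsMarkovKernel P]
    (Pr : S → Measure (ℕ → S))
    (hPr : ∀ x : S, IsMarkovPath P (Measure.dirac x) (Pr x))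
    (C : Set S) (hC : MeasurableSet C)
    (β : ℝ≥0∞) (hβ0 : 0 < β) (hβ1 : β < 1)
    (ν : Measure S) [IsProbabilityMeasure ν]
    (hmin : ∀ x ∈ C, β • ν ≤ P x)
    (K : Kernel (S × Bool) (S × Bool)) [IsMarkovKernel K]
    (hK : ∀ (x : S) (i : Bool),
      K (x, i) = (if i then ν else residDist P C β ν x).bind (tagDist C β)) :
    ∀ (x : S) (L : Measure (ℕ → S × Bool)),
      IsMarkovPath K (tagDist C β x) L →
      L.map (fun ω => fun n : ℕ => (ω n).1) = Pr x := by

  classical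
  intro x L hL
  obtain ⟨hLprob, hL0, hLrec⟩ := hL
  obtain ⟨hPrprob, hPr0, hPrrec⟩ := hPr x
  have hβle : β ≤ 1 := hβ1.le
  have mtag : Measurable (tagDist C β) := measurable_tagDist hC β
  have mresid : Measurable (residDist P C β ν) := measurable_residDist hC hβ1 hmin
  let tagK : Kernel S (S × Bool) := ⟨tagDist C β, mtag⟩
  haveI : IsMarkovKernel tagK := ⟨fun y => isProbability_tagDist hβle y⟩
  -- measurability of the `h n` integrand
  have h_meas : ∀ n : ℕ, Measurable fun u : Fin (n+1) → S =>
      (tagDist C β (u (Fin.last n))).map (fun p : S × Bool => (u, p.2)) := by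
    intro n
    exact measurable_map_kernel_param (κ := tagK)
      (ρ := fun u : Fin (n+1) → S => u (Fin.last n)) (measurable_pi_apply _)
      (F := fun q : (Fin (n+1) → S) × (S × Bool) => (q.1, q.2.2))
      (measurable_fst.prodMk measurable_snd.snd)
  have g_meas : ∀ n : ℕ, Measurable fun q : (Fin (n+1) → S) × Bool =>
      (K (q.1 (Fin.last n), q.2)).map
        (fun e : S × Bool => (Fin.snoc (α := fun _ => S) q.1 e.1, e.2)) := by
    intro n
    exact measurable_map_kernel_param (κ := K)
      (ρ := fun q : (Fin (n+1) → S) × Bool => (q.1 (Fin.last n), q.2))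
      (((measurable_pi_apply _).comp measurable_fst).prodMk measurable_snd)
      (F := fun w : ((Fin (n+1) → S) × Bool) × (S × Bool) =>
        (Fin.snoc (α := fun _ => S) w.1.1 w.2.1, w.2.2))
      (((measurable_snoc_pair (n+1)).comp
        ((measurable_fst.fst).prodMk measurable_snd.fst)).prodMk measurable_snd.snd)
  have g0_meas : ∀ n : ℕ, Measurable fun v : Fin (n+1) → S × Bool =>
      (K (v (Fin.last n))).map (Fin.snoc (α := fun _ => S × Bool) v) := by
    intro n
    have hF : Measurable fun w : (Fin (n+1) → S × Bool) × (S × Bool) =>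
        Fin.snoc (α := fun _ => S × Bool) w.1 w.2 := measurable_snoc_pair (n+1)
    exact measurable_map_kernel_param (κ := K) (measurable_pi_apply _) hF
  have Pmap_meas : ∀ n : ℕ, Measurable fun u : Fin (n+1) → S =>
      (P (u (Fin.last n))).map (Fin.snoc (α := fun _ => S) u) := by
    intro n
    have hF : Measurable fun w : (Fin (n+1) → S) × S =>
        Fin.snoc (α := fun _ => S) w.1 w.2 := measurable_snoc_pair (n+1)
    exact measurable_map_kernel_param (κ := P) (measurable_pi_apply _) hF
  -- main induction: law of ((X_0, ..., X_n), Y_n)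
  have main : ∀ n : ℕ,
      L.map (fun ω => ((fun i : Fin (n+1) => (ω (i : ℕ)).1), (ω n).2))
        = ((Pr x).map (fun ω => fun i : Fin (n+1) => ω (i : ℕ))).bind
            (fun u => (tagDist C β (u (Fin.last n))).map
              (fun p : S × Bool => (u, p.2))) := by
    intro n
    induction n with
    | zero =>
      have e1 : (fun ω : ℕ → S => fun i : Fin 1 => ω (i : ℕ))
          = (fun y : S => fun _ : Fin 1 => y) ∘ (fun ω : ℕ → S => ω 0) := by
        funext ω i
        simp
      have hm1 : Measurable fun y : S => fun _ : Fin 1 => y :=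
        measurable_pi_lambda _ fun _ => measurable_id
      have hRinit : ((Pr x).map (fun ω => fun i : Fin 1 => ω (i : ℕ)))
          = Measure.dirac (fun _ : Fin 1 => x) := by
        rw [e1, ← Measure.map_map hm1 (measurable_pi_apply 0), hPr0, Measure.map_dirac' hm1]
      have e2 : (fun ω : ℕ → S × Bool => ((fun i : Fin 1 => (ω (i : ℕ)).1), (ω 0).2))
          = (fun e : S × Bool => ((fun _ : Fin 1 => e.1), e.2))
            ∘ (fun ω : ℕ → S × Bool => ω 0) := by
        funext ω
        simp
      have hm2 : Measurable fun e : S × Bool => ((fun _ : Fin 1 => e.1), e.2) :=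
        (measurable_pi_lambda _ fun _ => measurable_fst).prodMk measurable_snd
      rw [hRinit, Measure.dirac_bind (h_meas 0), e2,
        ← Measure.map_map hm2 (measurable_pi_apply 0), hL0]
      rw [tagDist_map C β x hm2,
        tagDist_map C β ((fun _ : Fin 1 => x) (Fin.last 0))
          (measurable_const.prodMk measurable_snd)]
    | succ n ih =>
      have hmp2 : Measurable fun ω : ℕ → S × Bool => fun i : Fin (n+2) => ω (i : ℕ) :=
        measurable_pi_lambda _ fun _ => measurable_pi_apply _
      have hmp1 : Measurable fun ω : ℕ → S × Bool => fun i : Fin (n+1) => ω (i : ℕ) :=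
        measurable_pi_lambda _ fun _ => measurable_pi_apply _
      have hproj : Measurable fun v : Fin (n+2) → S × Bool =>
          ((fun i : Fin (n+2) => (v i).1), (v (Fin.last (n+1))).2) :=
        (measurable_pi_lambda _ fun i => (measurable_pi_apply i).fst).prodMk
          (measurable_pi_apply _).snd
      have hprojR : Measurable fun v : Fin (n+1) → S × Bool =>
          ((fun i : Fin (n+1) => (v i).1), (v (Fin.last n)).2) :=
        (measurable_pi_lambda _ fun i => (measurable_pi_apply i).fst).prodMk
          (measurable_pi_apply _).snd
      -- RHS computation
      have rhs : ((Pr x).map (fun ω => fun i : Fin (n+2) => ω (i : ℕ))).bind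
            (fun u => (tagDist C β (u (Fin.last (n+1)))).map
              (fun p : S × Bool => (u, p.2)))
          = ((Pr x).map (fun ω => fun i : Fin (n+1) => ω (i : ℕ))).bind
              (fun u => (P (u (Fin.last n))).bind
                (fun y => (tagDist C β y).map
                  (fun e : S × Bool => (Fin.snoc (α := fun _ => S) u e.1, e.2)))) := by
        rw [hPrrec n, Measure.bind_bind (Pmap_meas n).aemeasurable (h_meas (n+1)).aemeasurable]
        refine congrArg _ (funext fun u => ?_)
        have hsnocu : Measurable (Fin.snoc (α := fun _ => S) u) :=
          (measurable_snoc_pair (n+1)).comp (measurable_const.prodMk measurable_id)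
        rw [measure_bind_map _ hsnocu (h_meas (n+1))]
        refine congrArg _ (funext fun y => ?_)
        have hFu : Measurable fun e : S × Bool =>
            (Fin.snoc (α := fun _ => S) u e.1, e.2) :=
          ((measurable_snoc_pair (n+1)).comp
            (measurable_const.prodMk measurable_fst)).prodMk measurable_snd
        rw [show (Fin.snoc (α := fun _ => S) u y) (Fin.last (n+1)) = y from
            Fin.snoc_last _ _,
          tagDist_map C β y (measurable_const.prodMk measurable_snd),
          tagDist_map C β y hFu]
      refine Eq.trans ?_ rhs.symm
      -- LHS computation
      have e3 : (fun ω : ℕ → S × Bool =>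
            ((fun i : Fin (n+2) => (ω (i : ℕ)).1), (ω (n+1)).2))
          = (fun v : Fin (n+2) → S × Bool =>
              ((fun i : Fin (n+2) => (v i).1), (v (Fin.last (n+1))).2))
            ∘ (fun ω : ℕ → S × Bool => fun i : Fin (n+2) => ω (i : ℕ)) := by
        funext ω
        simp
      rw [e3, ← Measure.map_map hproj hmp2, hLrec n,
        measure_map_bind _ (g0_meas n) hproj]
      -- pointwise identification of the integrand with g ∘ projR
      have hpt : ∀ v : Fin (n+1) → S × Bool,
          ((K (v (Fin.last n))).map (Fin.snoc (α := fun _ => S × Bool) v)).map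
              (fun w : Fin (n+2) → S × Bool =>
                ((fun i : Fin (n+2) => (w i).1), (w (Fin.last (n+1))).2))
            = (K (((fun i : Fin (n+1) => (v i).1)) (Fin.last n), (v (Fin.last n)).2)).map
                (fun e : S × Bool =>
                  (Fin.snoc (α := fun _ => S) (fun i : Fin (n+1) => (v i).1) e.1, e.2)) := by
        intro v
        have hsnocv : Measurable (Fin.snoc (α := fun _ => S × Bool) v) :=
          (measurable_snoc_pair (n+1)).comp (measurable_const.prodMk measurable_id)
        rw [Measure.map_map hproj hsnocv]
        have harg : (((fun i : Fin (n+1) => (v i).1)) (Fin.last n), (v (Fin.last n)).2)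
            = v (Fin.last n) := rfl
        rw [harg]
        refine congrFun (congrArg Measure.map (funext fun e => ?_)) _
        refine Prod.ext ?_ ?_
        · funext i
          induction i using Fin.lastCases with
          | last => simp
          | cast j => simp
        · simp
      have e4 : (L.map (fun ω : ℕ → S × Bool => fun i : Fin (n+1) => ω (i : ℕ))).bind
            (fun v => ((K (v (Fin.last n))).map (Fin.snoc (α := fun _ => S × Bool) v)).map
              (fun w : Fin (n+2) → S × Bool =>
                ((fun i : Fin (n+2) => (w i).1), (w (Fin.last (n+1))).2)))
          = ((L.map (fun ω : ℕ → S × Bool => fun i : Fin (n+1) => ω (i : ℕ))).map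
              (fun v : Fin (n+1) → S × Bool =>
                ((fun i : Fin (n+1) => (v i).1), (v (Fin.last n)).2))).bind
              (fun q : (Fin (n+1) → S) × Bool =>
                (K (q.1 (Fin.last n), q.2)).map
                  (fun e : S × Bool => (Fin.snoc (α := fun _ => S) q.1 e.1, e.2))) := by
        rw [measure_bind_map _ hprojR (g_meas n)]
        exact congrArg _ (funext hpt)
      refine e4.trans ?_
      have e5 : (L.map (fun ω : ℕ → S × Bool => fun i : Fin (n+1) => ω (i : ℕ))).map
            (fun v : Fin (n+1) → S × Bool =>
              ((fun i : Fin (n+1) => (v i).1), (v (Fin.last n)).2))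
          = L.map (fun ω : ℕ → S × Bool =>
              ((fun i : Fin (n+1) => (ω (i : ℕ)).1), (ω n).2)) := by
        rw [Measure.map_map hprojR hmp1]
        refine congrFun (congrArg Measure.map (funext fun ω => ?_)) _
        simp
      rw [e5, ih, Measure.bind_bind (h_meas n).aemeasurable (g_meas n).aemeasurable]
      refine congrArg _ (funext fun u => ?_)
      -- the key one-step computation
      have hmk : Measurable fun p : S × Bool => (u, p.2) :=
        measurable_const.prodMk measurable_snd
      have hFu : Measurable fun e : S × Bool =>
          (Fin.snoc (α := fun _ => S) u e.1, e.2) :=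
        ((measurable_snoc_pair (n+1)).comp
          (measurable_const.prodMk measurable_fst)).prodMk measurable_snd
      have hφ : Measurable fun y => (tagDist C β y).map
          (fun e : S × Bool => (Fin.snoc (α := fun _ => S) u e.1, e.2)) :=
        (Measure.measurable_map _ hFu).comp mtag
      rw [measure_bind_map _ hmk (g_meas n)]
      have hgc : Measurable fun p : S × Bool =>
          (K ((u, p.2).1 (Fin.last n), (u, p.2).2)).map
            (fun e : S × Bool => (Fin.snoc (α := fun _ => S) (u, p.2).1 e.1, e.2)) :=
        (g_meas n).comp hmk
      have final : (β * C.indicator 1 (u (Fin.last n))) •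
            (K (u (Fin.last n), true)).map
              (fun e : S × Bool => (Fin.snoc (α := fun _ => S) u e.1, e.2))
          + (1 - β * C.indicator 1 (u (Fin.last n))) •
            (K (u (Fin.last n), false)).map
              (fun e : S × Bool => (Fin.snoc (α := fun _ => S) u e.1, e.2))
          = (P (u (Fin.last n))).bind
              (fun y => (tagDist C β y).map
                (fun e : S × Bool => (Fin.snoc (α := fun _ => S) u e.1, e.2))) := by
        rw [hK (u (Fin.last n)) true, hK (u (Fin.last n)) false]
        simp only [↓reduceIte, Bool.false_eq_true]
        rw [measure_map_bind _ mtag hFu, measure_map_bind _ mtag hFu,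
          ← measure_smul_bind _ _ hφ, ← measure_smul_bind _ _ hφ,
          ← measure_add_bind _ _ hφ, mix_residDist hβ1 hmin (u (Fin.last n))]
      exact (tagDist_bind C β (u (Fin.last n)) hgc).trans final
  -- finite-dimensional distributions of the first component
  have hpS : Measurable fun ω : ℕ → S × Bool => fun k : ℕ => (ω k).1 :=
    measurable_pi_lambda _ fun k => (measurable_pi_apply k).fst
  have fdd : ∀ n : ℕ,
      L.map (fun ω : ℕ → S × Bool => fun i : Fin (n+1) => (ω (i : ℕ)).1)
        = (Pr x).map (fun ω => fun i : Fin (n+1) => ω (i : ℕ)) := by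
    intro n
    have hbig : Measurable fun ω : ℕ → S × Bool =>
        ((fun i : Fin (n+1) => (ω (i : ℕ)).1), (ω n).2) :=
      (measurable_pi_lambda _ fun i => (measurable_pi_apply _).fst).prodMk
        (measurable_pi_apply n).snd
    have h1 := congrArg (fun μ : Measure ((Fin (n+1) → S) × Bool) =>
      μ.map Prod.fst) (main n)
    rw [Measure.map_map measurable_fst hbig,
      measure_map_bind _ (h_meas n) measurable_fst] at h1
    have hint : ∀ u : Fin (n+1) → S,
        ((tagDist C β (u (Fin.last n))).map (fun p : S × Bool => (u, p.2))).map Prod.fst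
          = Measure.dirac u := by
      intro u
      rw [Measure.map_map measurable_fst (measurable_const.prodMk measurable_snd)]
      have : (Prod.fst ∘ fun p : S × Bool => (u, p.2)) = fun _ : S × Bool => u := rfl
      rw [this, Measure.map_const, tagDist_univ hβle, one_smul]
    simp only [hint] at h1
    rw [Measure.bind_dirac] at h1
    exact h1
  -- conclude via the π-system of measurable cylinders
  haveI : IsProbabilityMeasure (Pr x) := hPrprob
  haveI hμprob : IsProbabilityMeasure
      (L.map (fun ω : ℕ → S × Bool => fun k : ℕ => (ω k).1)) :=
    Measure.isProbabilityMeasure_map hpS.aemeasurable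
  refine ext_of_generate_finite (measurableCylinders (fun _ : ℕ => S))
    generateFrom_measurableCylinders.symm isPiSystem_measurableCylinders ?_ ?_
  · intro t ht
    obtain ⟨I, A, hAmeas, rfl⟩ := (mem_measurableCylinders t).mp ht
    have hlt : ∀ i : ℕ, i ∈ I → i < I.sup id + 1 :=
      fun i hi => Nat.lt_succ_of_le (Finset.le_sup (f := id) hi)
    set N := I.sup id with hN
    have hrm : Measurable fun v : Fin (N+1) → S => fun i : I => v ⟨(i : ℕ), hlt i i.2⟩ :=
      measurable_pi_lambda _ fun i => measurable_pi_apply _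
    have hmfin : Measurable fun ω : ℕ → S => fun j : Fin (N+1) => ω (j : ℕ) :=
      measurable_pi_lambda _ fun _ => measurable_pi_apply _
    have hcyl : cylinder I A = (fun ω : ℕ → S => fun j : Fin (N+1) => ω (j : ℕ)) ⁻¹'
        ((fun v : Fin (N+1) → S => fun i : I => v ⟨(i : ℕ), hlt i i.2⟩) ⁻¹' A) := rfl
    rw [hcyl, ← Measure.map_apply hmfin (hrm hAmeas),
      ← Measure.map_apply hmfin (hrm hAmeas), Measure.map_map hmfin hpS]
    exact congrArg (fun μ : Measure (Fin (N+1) → S) =>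
      μ ((fun v : Fin (N+1) → S => fun i : I => v ⟨(i : ℕ), hlt i i.2⟩) ⁻¹' A)) (fdd N)
  · simp
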